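/- For every integer r ≥ 1, the following identity holds in ℚ(q): 1 + ((1/2)(q^2−q)(q+1)^r + (1/2)(q^2+q)(q−1)^r − q^2) + (q^r−1)(q+1) + ((q^(r−1)−1)/(q−1))·((q−1)^r − 1)·(q^3−q) = (1/2)(q^2−q)(q+1)^r + (1/2)(q^2+q)(q−1)^r + (q^(r−1)−1)(q−1)^(r−1)(q^3−q). (This shows that the E-polynomial of the reducible locus of Hom(F_r, PGL(2,ℂ)), computed as the sum of its four strata, equals the E-polynomial of the reducible locus of Hom(F_r, SL(2,ℂ)).) -/
import Mathlib


/-- The variable `q`, viewed as a rational function in `ℚ(q)`. -/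
noncomputable def q : RatFunc ℚ := RatFunc.X

lemma q_sub_one_ne_zero : q - 1 ≠ 0 := by
  rw [sub_ne_zero]
  intro h
  have : (Polynomial.X : Polynomial ℚ) = 1 := by
    apply RatFunc.algebraMap_injective ℚ
    simpa [q, RatFunc.algebraMap_X] using h
  simpa [Polynomial.coeff_one] using congrArg (Polynomial.coeff · 1) this

/-- The E-polynomial of the reducible locus of `Hom(F_r, PGL(2,ℂ))`, computed
as the sum of its four strata, equals the E-polynomial of the reducible locus
of `Hom(F_r, SL(2,ℂ))`. -/
theorem e_reducible_pgl2_eq_sl2 (r : ℕ) (hr : 1 ≤ r) :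
    (1:RatFunc ℚ)
      + ((1/2) * (q^2 - q) * (q + 1)^r + (1/2) * (q^2 + q) * (q - 1)^r - q^2)
      + (q^r - 1) * (q + 1)
      + ((q^(r-1) - 1) / (q - 1)) * ((q - 1)^r - 1) * (q^3 - q)
    = (1/2) * (q^2 - q) * (q + 1)^r + (1/2) * (q^2 + q) * (q - 1)^r
      + (q^(r-1) - 1) * (q - 1)^(r-1) * (q^3 - q) := by
  obtain ⟨s, rfl⟩ : ∃ s, r = s + 1 := ⟨r - 1, (Nat.succ_pred_eq_of_pos hr).symm⟩
  simp only [Nat.add_sub_cancel]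
  have h := q_sub_one_ne_zero
  field_simp
  ring
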